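/- For the Gumbel copula Ĉ(u,v) = exp(−((−log u)^φ + (−log v)^φ)^{1/φ}) with φ ≥ 1, the tail order is κ = 2^{1/φ} and the tail order function is τ(u,v) = (uv)^{2^{1/φ−1}}; i.e., for all u,v ≥ 0, lim_{t↓0} Ĉ(ut,vt)/t^{2^{1/φ}} = (uv)^{2^{1/φ−1}}. -/

import Mathlib

open Filter Set Real
open scoped Topology

private lemma aux_deriv (φ a b : ℝ) (hφ : 1 ≤ φ) :
    Tendsto (fun x : ℝ =>
        (((1 + a * x) ^ φ + (1 + b * x) ^ φ) ^ (1 / φ) - (2:ℝ) ^ (1 / φ)) / x)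
      (𝓝[≠] (0:ℝ)) (𝓝 ((2:ℝ) ^ (1 / φ - 1) * (a + b))) := by
  have hφ0 : φ ≠ 0 := by linarith
  have h1 : HasDerivAt (fun x : ℝ => (1 + a * x) ^ φ) (φ * a) 0 := by
    have hb : HasDerivAt (fun x : ℝ => 1 + a * x) a 0 := by
      simpa using ((hasDerivAt_id (0:ℝ)).const_mul a).const_add 1
    have := (Real.hasDerivAt_rpow_const (x := 1 + a * 0) (p := φ) (Or.inr hφ)).comp 0 hb
    simp at this; exact this
  have h2 : HasDerivAt (fun x : ℝ => (1 + b * x) ^ φ) (φ * b) 0 := by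
    have hb : HasDerivAt (fun x : ℝ => 1 + b * x) b 0 := by
      simpa using ((hasDerivAt_id (0:ℝ)).const_mul b).const_add 1
    have := (Real.hasDerivAt_rpow_const (x := 1 + b * 0) (p := φ) (Or.inr hφ)).comp 0 hb
    simp at this; exact this
  have hsum := h1.add h2
  have hval : (fun x : ℝ => (1 + a * x) ^ φ + (1 + b * x) ^ φ) 0 = 2 := by
    norm_num
  have houter : HasDerivAt (fun y : ℝ => y ^ (1 / φ))
      ((1 / φ) * (2:ℝ) ^ (1 / φ - 1)) ((fun x : ℝ => (1 + a * x) ^ φ + (1 + b * x) ^ φ) 0) := by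
    rw [hval]
    exact Real.hasDerivAt_rpow_const (Or.inl two_ne_zero)
  have hg : HasDerivAt (fun x : ℝ => ((1 + a * x) ^ φ + (1 + b * x) ^ φ) ^ (1 / φ))
      ((2:ℝ) ^ (1 / φ - 1) * (a + b)) 0 := by
    have := houter.comp 0 hsum
    refine this.congr_deriv ?_
    field_simp
  rw [hasDerivAt_iff_tendsto_slope] at hg
  refine hg.congr fun x => ?_
  simp only [slope_def_field, div_eq_mul_inv]
  norm_num [div_eq_mul_inv]

private lemma key_eq (φ : ℝ) (hφ0 : φ ≠ 0) (a b s : ℝ) (hs : 0 < s)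
    (hsa : 0 < s + a) (hsb : 0 < s + b) :
    s * ((1 + a * (1 / s)) ^ φ + (1 + b * (1 / s)) ^ φ) ^ (1 / φ)
      = ((s + a) ^ φ + (s + b) ^ φ) ^ (1 / φ) := by
  have hs' : s ≠ 0 := hs.ne'
  have e1 : 1 + a * (1 / s) = (s + a) / s := by field_simp
  have e2 : 1 + b * (1 / s) = (s + b) / s := by field_simp
  rw [e1, e2, Real.div_rpow hsa.le hs.le, Real.div_rpow hsb.le hs.le, ← add_div,
    Real.div_rpow (by positivity) (by positivity)]
  have hss : (s ^ φ) ^ (1 / φ) = s := by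
    rw [← Real.rpow_mul hs.le, mul_one_div, div_self hφ0, Real.rpow_one]
  rw [hss]
  field_simp

theorem gumbel_copula_tail_order (φ : ℝ) (hφ : 1 ≤ φ)
    (Chat : ℝ → ℝ → ℝ)
    (hChat : ∀ u v : ℝ, 0 < u → 0 < v →
      Chat u v = Real.exp (-(((-Real.log u) ^ φ + (-Real.log v) ^ φ) ^ (1 / φ))))
    (hChat0 : ∀ u v : ℝ, u = 0 ∨ v = 0 → Chat u v = 0) :
    ∀ u v : ℝ, 0 ≤ u → 0 ≤ v →
      Tendsto (fun t => Chat (u * t) (v * t) / t ^ ((2:ℝ) ^ (1 / φ)))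
        (𝓝[>] (0:ℝ)) (𝓝 ((u * v) ^ ((2:ℝ) ^ (1 / φ - 1)))) := by
  intro u v hu hv
  have hφ0 : φ ≠ 0 := by linarith
  have hc : (0:ℝ) < (2:ℝ) ^ (1 / φ - 1) := Real.rpow_pos_of_pos two_pos _
  rcases hu.eq_or_lt with hu0 | hu0
  · have : ∀ t : ℝ, Chat (u * t) (v * t) / t ^ ((2:ℝ) ^ (1 / φ)) = 0 := by
      intro t
      rw [hChat0 (u * t) (v * t) (Or.inl (by rw [← hu0]; ring)), zero_div]
    have h0 : (u * v) ^ ((2:ℝ) ^ (1 / φ - 1)) = 0 := by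
      rw [← hu0, zero_mul, Real.zero_rpow hc.ne']
    rw [h0]
    exact Tendsto.congr (fun t => (this t).symm) tendsto_const_nhds
  rcases hv.eq_or_lt with hv0 | hv0
  · have : ∀ t : ℝ, Chat (u * t) (v * t) / t ^ ((2:ℝ) ^ (1 / φ)) = 0 := by
      intro t
      rw [hChat0 (u * t) (v * t) (Or.inr (by rw [← hv0]; ring)), zero_div]
    have h0 : (u * v) ^ ((2:ℝ) ^ (1 / φ - 1)) = 0 := by
      rw [← hv0, mul_zero, Real.zero_rpow hc.ne']
    rw [h0]
    exact Tendsto.congr (fun t => (this t).symm) tendsto_const_nhds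
  -- main case
  set a := -Real.log u with ha
  set b := -Real.log v with hb
  -- the map t ↦ -1 / log t tends to 𝓝[>] 0
  have hlogbot : Tendsto Real.log (𝓝[>] (0:ℝ)) atBot := Real.tendsto_log_nhdsGT_zero
  have hm : Tendsto (fun t : ℝ => -(1 / Real.log t)) (𝓝[>] (0:ℝ)) (𝓝[>] (0:ℝ)) := by
    have h1 : Tendsto (fun t : ℝ => -Real.log t) (𝓝[>] (0:ℝ)) atTop :=
      tendsto_neg_atTop_iff.mpr hlogbot
    have h2 : Tendsto (fun t : ℝ => 1 / (-Real.log t)) (𝓝[>] (0:ℝ)) (𝓝 0) := by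
      simpa [one_div, Pi.inv_def] using h1.inv_tendsto_atTop
    have h3 : ∀ᶠ t in 𝓝[>] (0:ℝ), 1 / (-Real.log t) ∈ Ioi (0:ℝ) := by
      filter_upwards [h1.eventually_gt_atTop 0] with t ht
      exact div_pos one_pos ht
    have := tendsto_nhdsWithin_of_tendsto_nhds_of_eventually_within _ h2 h3
    refine this.congr fun t => ?_
    simp [one_div, inv_neg]
  -- the difference quotient limit
  have hslope := (aux_deriv φ a b hφ).comp
    (hm.mono_right (nhdsWithin_mono _ fun x hx => ne_of_gt hx))
  have hexp := (Real.continuous_exp.tendsto _).comp hslope.neg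
  -- final value matching
  have hval : Real.exp (-((2:ℝ) ^ (1 / φ - 1) * (a + b)))
      = (u * v) ^ ((2:ℝ) ^ (1 / φ - 1)) := by
    rw [Real.rpow_def_of_pos (mul_pos hu0 hv0), Real.log_mul hu0.ne' hv0.ne', ha, hb]
    ring_nf
  rw [← hval]
  refine hexp.congr' ?_
  -- eventual equality
  have hmem : Ioo (0:ℝ) (min 1 (min u⁻¹ v⁻¹)) ∈ 𝓝[>] (0:ℝ) := by
    exact Ioo_mem_nhdsGT_of_mem ⟨le_refl _, by positivity⟩
  filter_upwards [hmem] with t ht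
  obtain ⟨ht0, htlt⟩ := ht
  have ht1 : t < 1 := lt_of_lt_of_le htlt (min_le_left _ _)
  have htu : u * t < 1 := by
    have : t < u⁻¹ := lt_of_lt_of_le htlt (le_trans (min_le_right _ _) (min_le_left _ _))
    calc u * t < u * u⁻¹ := by exact mul_lt_mul_of_pos_left this hu0
    _ = 1 := mul_inv_cancel₀ hu0.ne'
  have htv : v * t < 1 := by
    have : t < v⁻¹ := lt_of_lt_of_le htlt (le_trans (min_le_right _ _) (min_le_right _ _))
    calc v * t < v * v⁻¹ := by exact mul_lt_mul_of_pos_left this hv0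
    _ = 1 := mul_inv_cancel₀ hv0.ne'
  set s := -Real.log t with hsdef
  have hs : 0 < s := by
    have := Real.log_neg ht0 ht1
    simpa [hsdef] using this
  have hsa : 0 < s + a := by
    have h := Real.log_neg (mul_pos hu0 ht0) htu
    rw [Real.log_mul hu0.ne' ht0.ne'] at h
    simp only [hsdef, ha]; linarith
  have hsb : 0 < s + b := by
    have h := Real.log_neg (mul_pos hv0 ht0) htv
    rw [Real.log_mul hv0.ne' ht0.ne'] at h
    simp only [hsdef, hb]; linarith
  have hx : -(1 / Real.log t) = 1 / s := by
    simp [hsdef, one_div, inv_neg]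
  -- unfold composed function
  simp only [Function.comp_def]
  rw [hx]
  -- LHS of the goal: exp(-(( g(1/s) - 2^{1/φ})/(1/s)))
  rw [hChat (u * t) (v * t) (mul_pos hu0 ht0) (mul_pos hv0 ht0)]
  have hlu : -Real.log (u * t) = s + a := by
    rw [Real.log_mul hu0.ne' ht0.ne']; simp [hsdef, ha]
  have hlv : -Real.log (v * t) = s + b := by
    rw [Real.log_mul hv0.ne' ht0.ne']; simp [hsdef, hb]
  rw [hlu, hlv, Real.rpow_def_of_pos ht0]
  rw [← Real.exp_sub]
  congr 1
  have hkey := key_eq φ hφ0 a b s hs hsa hsb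
  have hlog : Real.log t = -s := by simp [hsdef]
  rw [hlog]
  rw [← hkey]
  have hs' : s ≠ 0 := hs.ne'
  field_simp
  ring
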